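/- Let q be a prime power, F_{q^m} an extension of F_q, and a_1,...,a_n elements of F_{q^m}. The k×n matrix M with entries M_{i,j} = a_j^{q^{i-1}} (the Moore matrix) has the property that every k×k submatrix of M is invertible if and only if the elements a_1,...,a_n are k-wise linearly independent over F_q (every subset of size at most k is F_q-linearly independent). -/

import Mathlib

open Matrix Polynomial

section Moore

variable {F K : Type*} [Field F] [Fintype F] [Field K] [Algebra F K]

lemma sum_smul_pow_card_pow {ι : Type*} (s : Finset ι) (c : ι → F) (w : ι → K) (t : ℕ) :
    (∑ j ∈ s, c j • w j) ^ (Fintype.card F) ^ t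
      = ∑ j ∈ s, c j • (w j ^ (Fintype.card F) ^ t) := by
  set p := ringChar F with hpdef
  haveI : CharP F p := ringChar.charP F
  have hp : p.Prime := CharP.char_is_prime F p
  haveI : Fact p.Prime := ⟨hp⟩
  haveI : CharP K p := charP_of_injective_algebraMap (algebraMap F K).injective p
  haveI : ExpChar K p := ExpChar.prime hp
  obtain ⟨e, -, hcard⟩ := FiniteField.card F p
  have hqp : (Fintype.card F) ^ t = p ^ (e * t) := by rw [hcard, ← pow_mul]
  rw [hqp, sum_pow_char_pow]
  refine Finset.sum_congr rfl fun j _ => ?_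
  rw [_root_.smul_pow, ← hqp, FiniteField.pow_card_pow]

lemma moore_det_ne_zero_of_linearIndependent {k : ℕ} {v : Fin k → K}
    (hv : LinearIndependent F v) :
    (Matrix.of fun i j : Fin k => v j ^ (Fintype.card F) ^ (i : ℕ)).det ≠ 0 := by
  classical
  set q := Fintype.card F with hq
  intro hdet
  obtain ⟨lam, hlam, hmul⟩ := (Matrix.exists_vecMul_eq_zero_iff).2 hdet
  obtain ⟨i0, hi0⟩ := Function.ne_iff.1 hlam
  have hq2 : 1 < q := Fintype.one_lt_card
  -- the linearized polynomial
  set P : K[X] := ∑ i : Fin k, Polynomial.C (lam i) * Polynomial.X ^ (q ^ (i : ℕ)) with hP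
  have hcol : ∀ j : Fin k, ∑ i : Fin k, lam i * v j ^ q ^ (i : ℕ) = 0 := by
    intro j
    have := congrFun hmul j
    simpa [Matrix.vecMul, dotProduct] using this
  have hPne : P ≠ 0 := by
    intro h0
    have : P.coeff (q ^ (i0 : ℕ)) = lam i0 := by
      rw [hP, Polynomial.finset_sum_coeff]
      rw [Finset.sum_eq_single i0]
      · simp
      · intro i _ hii
        have hne : q ^ (i0 : ℕ) ≠ q ^ (i : ℕ) := fun he =>
          hii (Fin.ext (Nat.pow_right_injective hq2 he)).symm
        simp [Polynomial.coeff_C_mul, Polynomial.coeff_X_pow, hne]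
      · simp
    rw [h0] at this
    simp only [Polynomial.coeff_zero] at this
    exact hi0 (by simpa using this.symm)
  have hk1 : 0 < k := i0.pos
  -- degree bound
  have hdeg : P.natDegree < q ^ k := by
    have : P.natDegree ≤ q ^ (k - 1) := by
      refine Polynomial.natDegree_sum_le_of_forall_le _ _ fun i _ => ?_
      refine (Polynomial.natDegree_C_mul_le _ _).trans ?_
      simpa using Nat.pow_le_pow_right (le_of_lt hq2) (Nat.le_sub_one_of_lt i.isLt)
    exact lt_of_le_of_lt this (Nat.pow_lt_pow_right hq2 (Nat.sub_lt hk1 one_pos))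
  -- every element of the span is a root
  set g : (Fin k → F) → K := fun c => ∑ j, c j • v j with hg
  have hginj : Function.Injective g := by
    intro c c' hcc
    have h0 : ∑ j, (c j - c' j) • v j = 0 := by
      simp only [sub_smul, Finset.sum_sub_distrib]
      exact sub_eq_zero.2 hcc
    have h1 := Fintype.linearIndependent_iff.1 hv _ h0
    funext j
    exact sub_eq_zero.1 (h1 j)
  have hroot : ∀ c : Fin k → F, P.eval (g c) = 0 := by
    intro c
    have hx : ∀ i : Fin k, (g c) ^ q ^ (i : ℕ) = ∑ j, c j • (v j ^ q ^ (i : ℕ)) := fun i =>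
      sum_smul_pow_card_pow Finset.univ c v (i : ℕ)
    rw [hP]
    simp only [Polynomial.eval_finset_sum, Polynomial.eval_mul, Polynomial.eval_C,
      Polynomial.eval_pow, Polynomial.eval_X]
    calc ∑ i : Fin k, lam i * (g c) ^ q ^ (i : ℕ)
        = ∑ i : Fin k, ∑ j : Fin k, c j • (lam i * v j ^ q ^ (i : ℕ)) := by
          refine Finset.sum_congr rfl fun i _ => ?_
          rw [hx i, Finset.mul_sum]
          exact Finset.sum_congr rfl fun j _ => (mul_smul_comm _ _ _)
      _ = ∑ j : Fin k, c j • ∑ i : Fin k, lam i * v j ^ q ^ (i : ℕ) := by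
          rw [Finset.sum_comm]
          exact Finset.sum_congr rfl fun j _ => (Finset.smul_sum).symm
      _ = 0 := by simp [hcol]
  -- counting
  have hsub : (Finset.univ.image g) ⊆ P.roots.toFinset := by
    intro x hx
    obtain ⟨c, -, rfl⟩ := Finset.mem_image.1 hx
    rw [Multiset.mem_toFinset, Polynomial.mem_roots hPne]
    exact hroot c
  have hcardS : (Finset.univ.image g).card = q ^ k := by
    rw [Finset.card_image_of_injective _ hginj]
    simp [hq]
  have : q ^ k ≤ P.natDegree := by
    calc q ^ k = (Finset.univ.image g).card := hcardS.symm
      _ ≤ P.roots.toFinset.card := Finset.card_le_card hsub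
      _ ≤ Multiset.card P.roots := Multiset.toFinset_card_le _
      _ ≤ P.natDegree := Polynomial.card_roots' P
  omega

lemma linearIndependent_of_moore_det_ne_zero {k : ℕ} {v : Fin k → K}
    (h : (Matrix.of fun i j : Fin k => v j ^ (Fintype.card F) ^ (i : ℕ)).det ≠ 0) :
    LinearIndependent F v := by
  classical
  by_contra hv
  apply h
  rw [Fintype.not_linearIndependent_iff] at hv
  obtain ⟨c, hsum, i0, hc0⟩ := hv
  rw [← Matrix.exists_mulVec_eq_zero_iff]
  refine ⟨fun j => algebraMap F K (c j), ?_, ?_⟩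
  · intro h0
    exact hc0 (by simpa using congrFun h0 i0)
  · funext i
    have : ∑ j, c j • (v j ^ (Fintype.card F) ^ (i : ℕ)) = 0 := by
      rw [← sum_smul_pow_card_pow Finset.univ c v (i : ℕ), hsum,
        zero_pow (pow_ne_zero _ Fintype.card_ne_zero)]
    simpa [Matrix.mulVec, dotProduct, Algebra.smul_def, mul_comm] using this

end Moore

open Matrix

/-- **Moore matrix / MDS criterion.** Let `q` be the size of the finite field `F`,
`K` an extension of `F` of degree `m`, and `a 1, ..., a n ∈ K`. The `k × n` Moore matrix
`M i j = (a j) ^ (q ^ i)` has all of its `k × k` submatrices invertible (equivalently, it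
generates an `[n, k]` MDS code) if and only if `a 1, ..., a n` are `k`-wise linearly
independent over `F`. -/
theorem moore_matrix_mds_iff_kwise_independent
    (F K : Type*) [Field F] [Fintype F] [Field K] [Algebra F K]
    (q : ℕ) (hq : q = Fintype.card F)
    (m : ℕ) (hm : Module.finrank F K = m)
    (k n : ℕ) (hkn : k ≤ n) (a : Fin n → K)
    (M : Matrix (Fin k) (Fin n) K) (hM : ∀ i j, M i j = a j ^ q ^ (i : ℕ)) :
    (∀ f : Fin k → Fin n, Function.Injective f → IsUnit (M.submatrix id f).det) ↔
      (∀ s : Finset (Fin n), s.card ≤ k →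
        LinearIndependent F (fun j : s => a (j : Fin n))) := by
  classical
  subst hq
  have hMsub : ∀ f : Fin k → Fin n,
      M.submatrix id f = Matrix.of fun i j : Fin k =>
        (a ∘ f) j ^ (Fintype.card F) ^ (i : ℕ) := by
    intro f; ext i j; simp [Matrix.submatrix, hM]
  constructor
  · intro hdet s hs
    obtain ⟨t, hst, htcard⟩ := Finset.exists_superset_card_eq hs (by simpa using hkn)
    let e : Fin k ≃ t := (t.equivFin.trans (finCongr htcard)).symm
    let f : Fin k → Fin n := fun i => (e i : Fin n)
    have hf : Function.Injective f := Subtype.val_injective.comp e.injective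
    have hli : LinearIndependent F (a ∘ f) := by
      apply linearIndependent_of_moore_det_ne_zero (F := F)
      rw [← hMsub f]
      exact (hdet f hf).ne_zero
    have hcomp : (fun j : s => a (j : Fin n)) =
        (a ∘ f) ∘ fun j : s => e.symm ⟨(j : Fin n), hst j.2⟩ := by
      funext j
      simp [f, Equiv.apply_symm_apply]
    rw [hcomp]
    exact hli.comp _ fun j j' hjj => by
      have := congrArg (fun x => ((e x : Fin n))) hjj
      have h2 := congrArg Subtype.val (e.symm.injective hjj)
      exact Subtype.ext h2
  · intro hind f hf
    rw [hMsub f]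
    rw [isUnit_iff_ne_zero]
    apply moore_det_ne_zero_of_linearIndependent
    have hs : (Finset.univ.image f).card ≤ k := by
      rw [Finset.card_image_of_injective _ hf]; simp
    have hli := hind _ hs
    have : (a ∘ f) = (fun j : (Finset.univ.image f : Finset (Fin n)) => a (j : Fin n)) ∘
        fun i : Fin k => (⟨f i, Finset.mem_image_of_mem f (Finset.mem_univ i)⟩ :
          (Finset.univ.image f : Finset (Fin n))) := by
      funext i; rfl
    rw [this]
    exact hli.comp _ fun i i' hii => hf (by simpa [Subtype.ext_iff] using hii)
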